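/- Let f : [0,1] → ℝ be a C^{2k+5} convex function with f(0) = 0 and f'(0) = 0, satisfying ∑_{j=2}^{k} |f^{(j)}(r)|/j! ≥ m and max_{0 ≤ j ≤ 2k+5} |f^{(j)}(r)| ≤ M for all r ∈ [0,1]. Then there exist constants c, C > 0 depending only on k, m, M such that for all r ∈ [0,1]: c (∑_{j=1}^{k-1} |f^{(j+1)}(0)| r^j / j! + M(k+1) r^{k}) ≤ f'(r) ≤ C (∑_{j=1}^{k-1} |f^{(j+1)}(0)| r^j / j! + M(k+1) r^{k}). -/

import Mathlib

open Set

-- within = global iterated derivatives on Icc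
lemma iterWithin_eq {N : ℕ} {f : ℝ → ℝ} (hf : ContDiff ℝ (N : ℕ) f) {a b : ℝ} (hab : a < b) :
    ∀ j : ℕ, j ≤ N → ∀ x ∈ Set.Icc a b,
      iteratedDerivWithin j f (Set.Icc a b) x = iteratedDeriv j f x := by
  intro j
  induction j with
  | zero => intro _ x _; simp
  | succ n ih =>
    intro hn x hx
    rw [iteratedDerivWithin_succ]
    rw [derivWithin_congr (fun y hy => ih (by omega) y hy) (ih (by omega) x hx)]
    rw [(((hf.differentiable_iteratedDeriv n (by exact_mod_cast Nat.lt_of_lt_of_le n.lt_succ_self hn))) x).derivWithin ((uniqueDiffOn_Icc hab) x hx)]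
    rw [← iteratedDeriv_succ]

set_option maxHeartbeats 1000000 in
lemma landau : ∀ n : ℕ, 1 ≤ n → ∃ K : ℝ, 1 ≤ K ∧
    ∀ (u : ℝ → ℝ), ContDiff ℝ (n : ℕ) u → ∀ (a b S0 Sn : ℝ), a < b → 0 ≤ Sn →
      (∀ x ∈ Set.Icc a b, |u x| ≤ S0) →
      (∀ x ∈ Set.Icc a b, |iteratedDeriv n u x| ≤ Sn) →
      ∀ j ≤ n, ∀ x ∈ Set.Icc a b,
        |iteratedDeriv j u x| ≤ K * (S0 / (b - a) ^ j + Sn * (b - a) ^ (n - j)) := by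
  intro n
  induction n with
  | zero => omega
  | succ n ih =>
    intro _
    rcases Nat.eq_zero_or_pos n with rfl | hn
    · -- base case n+1 = 1
      refine ⟨1, le_refl 1, ?_⟩
      intro u hu a b S0 Sn hab hSn hS0 hSn' j hj x hx
      have hρ : (0:ℝ) < b - a := by linarith
      have hS0' : 0 ≤ S0 := le_trans (abs_nonneg _) (hS0 a ⟨le_refl a, hab.le⟩)
      interval_cases j
      · have h1 := hS0 x hx
        have h2 : 0 ≤ Sn * (b-a)^(1-0) := by positivity
        simp only [iteratedDeriv_zero, pow_zero, div_one, one_mul]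
        linarith
      · have h1 := hSn' x hx
        simp only [zero_add, iteratedDeriv_one] at h1
        have h2 : 0 ≤ S0 / (b-a)^1 := by positivity
        simp only [zero_add, iteratedDeriv_one, pow_one, Nat.sub_self, pow_zero, mul_one,
          one_mul] at h2 ⊢
        linarith
    · -- inductive step
      obtain ⟨K, hK1, hIH⟩ := ih hn
      have hKpos : (0:ℝ) < K := by linarith
      refine ⟨8 * K ^ 2, by nlinarith, ?_⟩
      intro u hu a b S0 Sn hab hSn hS0 hSn' j hj x hx
      have hρ : (0:ℝ) < b - a := by linarith
      set ρ := b - a with hρdef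
      have hρne : ρ ≠ 0 := ne_of_gt hρ
      have hS0' : 0 ≤ S0 := le_trans (abs_nonneg _) (hS0 a ⟨le_refl a, hab.le⟩)
      have hu' : ContDiff ℝ (n : ℕ) (deriv u) := by
        have h1 : ContDiff ℝ ((n : WithTop ℕ∞) + 1) u := by exact_mod_cast hu
        exact (contDiff_succ_iff_deriv.mp h1).2.2
      have hdiffu' : Differentiable ℝ (deriv u) := hu'.differentiable (by exact_mod_cast hn.ne')
      have hSn'' : ∀ y ∈ Set.Icc a b, |iteratedDeriv n (deriv u) y| ≤ Sn := by
        intro y hy; rw [← iteratedDeriv_succ']; exact hSn' y hy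
      obtain ⟨x₁, hx₁I, hmax⟩ := isCompact_Icc.exists_isMaxOn (Set.nonempty_Icc.mpr hab.le)
        ((hdiffu'.continuous.abs).continuousOn : ContinuousOn (fun y => |deriv u y|) (Set.Icc a b))
      set T1 := |deriv u x₁| with hT1def
      have hT1 : ∀ y ∈ Set.Icc a b, |deriv u y| ≤ T1 := fun y hy => hmax hy
      have hT1nonneg : 0 ≤ T1 := abs_nonneg _
      have hI := hIH (deriv u) hu' a b T1 Sn hab hSn hT1 hSn''
      have hT2 : ∀ y ∈ Set.Icc a b, |deriv (deriv u) y| ≤ K * (T1 / ρ + Sn * ρ ^ (n - 1)) := by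
        intro y hy
        have h := hI 1 hn y hy
        simpa [iteratedDeriv_one, pow_one] using h
      set T2 := K * (T1 / ρ + Sn * ρ ^ (n - 1)) with hT2def
      have hT2nonneg : 0 ≤ T2 := by
        have h1 : 0 ≤ T1 / ρ + Sn * ρ ^ (n - 1) := by positivity
        exact mul_nonneg hKpos.le h1
      set ε : ℝ := 1 / (2 * K) with hεdef
      have hεpos : 0 < ε := by positivity
      have hεle : ε ≤ 1 := by
        rw [hεdef, div_le_one (by linarith)]; linarith
      have hερpos : 0 < ε * ρ := by positivity
      have hερle : ε * ρ ≤ ρ := by nlinarith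
      set c := min x₁ (b - ε * ρ) with hcdef
      set d := c + ε * ρ with hddef
      have hac : a ≤ c := le_min hx₁I.1 (by simp only [hρdef] at hερle ⊢; linarith)
      have hdb : d ≤ b := by
        have h1 : c ≤ b - ε * ρ := min_le_right _ _
        simp only [hddef]; linarith
      have hcx₁ : c ≤ x₁ := min_le_left _ _
      have hx₁d : x₁ ≤ d := by
        rcases le_total x₁ (b - ε * ρ) with h | h
        · have he : c = x₁ := min_eq_left h
          simp only [hddef, he]; linarith
        · have he : c = b - ε * ρ := min_eq_right h
          simp only [hddef, he]; linarith [hx₁I.2]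
      have hcd : c < d := by simp only [hddef]; linarith
      have hJsub : Set.Icc c d ⊆ Set.Icc a b := Set.Icc_subset_Icc hac hdb
      have hdc : d - c = ε * ρ := by simp only [hddef]; ring
      have hudiff : Differentiable ℝ u :=
        hu.differentiable (by simp)
      obtain ⟨ξ, hξ, hξeq⟩ := exists_deriv_eq_slope u hcd (hudiff.continuous.continuousOn)
        (hudiff.differentiableOn)
      have hξI : ξ ∈ Set.Icc c d := ⟨hξ.1.le, hξ.2.le⟩
      have h2S0 : |u d - u c| ≤ 2 * S0 := by
        have hd1 := hS0 d (hJsub ⟨hcd.le, le_refl d⟩)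
        have hc1 := hS0 c (hJsub ⟨le_refl c, hcd.le⟩)
        calc |u d - u c| ≤ |u d| + |u c| := abs_sub (u d) (u c)
          _ ≤ 2 * S0 := by linarith
      have hslope : |deriv u ξ| ≤ 2 * S0 / (ε * ρ) := by
        rw [hξeq, abs_div, abs_of_pos (show (0:ℝ) < d - c by linarith), hdc]
        exact div_le_div_of_nonneg_right h2S0 hερpos.le
      have hlip : |deriv u x₁ - deriv u ξ| ≤ T2 * (ε * ρ) := by
        have h := (convex_Icc c d).norm_image_sub_le_of_norm_deriv_le
          (fun y _ => hdiffu' y)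
          (fun y hy => by rw [Real.norm_eq_abs]; exact hT2 y (hJsub hy)) hξI ⟨hcx₁, hx₁d⟩
        rw [Real.norm_eq_abs, Real.norm_eq_abs] at h
        have hdist : |x₁ - ξ| ≤ ε * ρ := by
          rw [abs_sub_le_iff]
          constructor
          · linarith [hξI.1, hx₁d]
          · linarith [hξI.2, hcx₁]
        calc |deriv u x₁ - deriv u ξ| ≤ T2 * |x₁ - ξ| := h
          _ ≤ T2 * (ε * ρ) := by nlinarith
      have hpow : ρ ^ (n - 1) * ρ = ρ ^ n := by
        rw [← pow_succ]; congr 1; omega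
      have hT1bound : T1 ≤ 8 * K * S0 / ρ + Sn * ρ ^ n := by
        have h0 : T1 ≤ |deriv u ξ| + |deriv u x₁ - deriv u ξ| := by
          calc T1 = |deriv u ξ + (deriv u x₁ - deriv u ξ)| := by rw [hT1def]; ring_nf
            _ ≤ |deriv u ξ| + |deriv u x₁ - deriv u ξ| := abs_add_le _ _
        have e1 : 2 * S0 / (ε * ρ) = 4 * K * S0 / ρ := by
          rw [hεdef]; field_simp; ring
        have e2 : T2 * (ε * ρ) = T1 / 2 + Sn * ρ ^ n / 2 := by
          rw [hT2def, hεdef, ← hpow]; field_simp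
        have h1 : T1 ≤ 2 * S0 / (ε * ρ) + T2 * (ε * ρ) :=
          h0.trans (add_le_add hslope hlip)
        rw [e1, e2] at h1
        have e6 : 8 * K * S0 / ρ = 2 * (4 * K * S0 / ρ) := by ring
        rw [e6]
        linarith
      rcases j with _ | j'
      · have h1 := hS0 x hx
        have h2 : 0 ≤ Sn * ρ ^ (n + 1 - 0) := by positivity
        simp only [iteratedDeriv_zero, pow_zero, div_one]
        have hK2 : (1:ℝ) ≤ K^2 := by nlinarith
        nlinarith [mul_nonneg (show (0:ℝ) ≤ K^2 - 1 by nlinarith) hS0',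
          mul_nonneg (show (0:ℝ) ≤ K^2 - 1 by nlinarith) h2, h1, h2, hS0']
      · have hj' : j' ≤ n := by omega
        have h := hI j' hj' x hx
        have hLHS : iteratedDeriv (j' + 1) u x = iteratedDeriv j' (deriv u) x := by
          rw [iteratedDeriv_succ']
        have hPj : (0:ℝ) < ρ ^ j' := pow_pos hρ _
        have hPjne : ρ ^ j' ≠ 0 := ne_of_gt hPj
        have hPj1 : (0:ℝ) < ρ ^ (j' + 1) := pow_pos hρ _
        have hQ : (0:ℝ) < ρ ^ (n - j') := pow_pos hρ _
        have hpow2 : ρ ^ n = ρ ^ (n - j') * ρ ^ j' := by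
          rw [← pow_add]; congr 1; omega
        have hstep : T1 / ρ ^ j' ≤ 8 * K * S0 / ρ ^ (j' + 1) + Sn * ρ ^ (n - j') := by
          have h9 : T1 / ρ ^ j' ≤ (8 * K * S0 / ρ + Sn * ρ ^ n) / ρ ^ j' :=
            div_le_div_of_nonneg_right hT1bound hPj.le
          have e3 : (8 * K * S0 / ρ + Sn * ρ ^ n) / ρ ^ j'
              = 8 * K * S0 / ρ ^ (j' + 1) + Sn * ρ ^ (n - j') := by
            rw [hpow2, pow_succ]
            field_simp
          rw [e3] at h9
          exact h9
        have hexp : n + 1 - (j' + 1) = n - j' := by omega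
        rw [hLHS, hexp]
        calc |iteratedDeriv j' (deriv u) x| ≤ K * (T1 / ρ ^ j' + Sn * ρ ^ (n - j')) := h
          _ ≤ K * ((8 * K * S0 / ρ ^ (j' + 1) + Sn * ρ ^ (n - j')) + Sn * ρ ^ (n - j')) := by
              apply mul_le_mul_of_nonneg_left _ hKpos.le
              linarith [hstep]
          _ ≤ 8 * K ^ 2 * (S0 / ρ ^ (j' + 1) + Sn * ρ ^ (n - j')) := by
              have hSQ : 0 ≤ Sn * ρ ^ (n - j') := mul_nonneg hSn hQ.le
              have e4 : K * ((8 * K * S0 / ρ ^ (j' + 1) + Sn * ρ ^ (n - j')) + Sn * ρ ^ (n - j'))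
                  = 8 * K ^ 2 * (S0 / ρ ^ (j' + 1)) + 2 * (K * (Sn * ρ ^ (n - j'))) := by ring
              have e5 : 8 * K ^ 2 * (S0 / ρ ^ (j' + 1) + Sn * ρ ^ (n - j'))
                  = 8 * K ^ 2 * (S0 / ρ ^ (j' + 1)) + 8 * (K * (Sn * ρ ^ (n - j'))) * K := by ring
              have h8 : 2 * (K * (Sn * ρ ^ (n - j'))) ≤ 8 * (K * (Sn * ρ ^ (n - j'))) * K := by
                nlinarith [mul_nonneg hKpos.le hSQ]
              linarith [e4, e5, h8]

lemma sum_fact_le : ∀ k : ℕ, 2 ≤ k →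
    (∑ j ∈ Finset.Icc 2 k, ((Nat.factorial j : ℝ))⁻¹) ≤ 1 - ((Nat.factorial k : ℝ))⁻¹ := by
  intro k hk
  induction k, hk using Nat.le_induction with
  | base =>
    rw [Finset.Icc_self, Finset.sum_singleton]
    norm_num [Nat.factorial]
  | succ n hn ih =>
    rw [Finset.sum_Icc_succ_top (by omega)]
    have h1 : (0:ℝ) < (Nat.factorial n : ℝ) := by exact_mod_cast n.factorial_pos
    have h2 : (0:ℝ) < (Nat.factorial (n+1) : ℝ) := by exact_mod_cast (n+1).factorial_pos
    have h3 : ((Nat.factorial (n+1)) : ℝ) = ((n:ℝ)+1) * (Nat.factorial n : ℝ) := by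
      rw [Nat.factorial_succ]; push_cast; ring
    have hn1 : (2:ℝ) ≤ (n:ℝ) + 1 := by
      have : (2:ℕ) ≤ n + 1 := by omega
      exact_mod_cast this
    have hn1pos : (0:ℝ) < (n:ℝ) + 1 := by linarith
    have key : 2 * ((Nat.factorial (n+1) : ℝ))⁻¹ ≤ ((Nat.factorial n : ℝ))⁻¹ := by
      rw [h3, mul_inv]
      have ha : ((n:ℝ)+1)⁻¹ ≤ 1/2 := by
        rw [inv_le_comm₀ hn1pos (by norm_num)]
        linarith
      have hb : (0:ℝ) < ((Nat.factorial n : ℝ))⁻¹ := inv_pos.mpr h1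
      nlinarith
    linarith

set_option maxHeartbeats 1000000 in
theorem stmt_1 (k : ℕ) (hk : 2 ≤ k) (m M : ℝ) (hm : 0 < m) (hM : 0 < M) :
    ∃ c C : ℝ, 0 < c ∧ 0 < C ∧
      ∀ f : ℝ → ℝ, ContDiff ℝ (2 * k + 5 : ℕ) f →
        ConvexOn ℝ (Set.Icc (0 : ℝ) 1) f →
        f 0 = 0 → deriv f 0 = 0 →
        (∀ r ∈ Set.Icc (0 : ℝ) 1,
          m ≤ ∑ j ∈ Finset.Icc 2 k, |iteratedDeriv j f r| / (Nat.factorial j)) →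
        (∀ r ∈ Set.Icc (0 : ℝ) 1, ∀ j ≤ 2 * k + 5,
          |iteratedDeriv j f r| ≤ M) →
        ∀ r ∈ Set.Icc (0 : ℝ) 1,
          c * (∑ j ∈ Finset.Icc 1 (k - 1), |iteratedDeriv (j + 1) f 0| * r ^ j / (Nat.factorial j)
                + M * (k + 1) * r ^ k) ≤ deriv f r ∧
          deriv f r ≤ C * (∑ j ∈ Finset.Icc 1 (k - 1), |iteratedDeriv (j + 1) f 0| * r ^ j / (Nat.factorial j)
                + M * (k + 1) * r ^ k) := by
  obtain ⟨K, hK1, hLK⟩ := landau k (by omega)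
  have hKpos : (0:ℝ) < K := by linarith
  set r₀ : ℝ := min 1 (m / (2 * K * M)) with hr₀def
  have hr₀pos : 0 < r₀ := lt_min one_pos (by positivity)
  have hr₀le1 : r₀ ≤ 1 := min_le_left _ _
  set c₁ : ℝ := (m / (2 * K)) * r₀ ^ k with hc₁def
  have hc₁pos : 0 < c₁ := by positivity
  set B : ℝ := K * (1 + M / c₁) * (k : ℝ) + ((k : ℝ) + 1) * (M / c₁) + 1 with hBdef
  have hBpos : 0 < B := by positivity
  refine ⟨1 / B, 1, by positivity, one_pos, ?_⟩
  intro f hf hconv hf0 hf'0 hft hM' r hr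
  have hfd : Differentiable ℝ f :=
    hf.differentiable (by simp)
  have hg : ContDiff ℝ ((2*k+4 : ℕ) : ℕ) (deriv f) := by
    have h0 : 2*k+5 = (2*k+4)+1 := by omega
    rw [h0] at hf
    have h1 : ContDiff ℝ (((2*k+4 : ℕ) : WithTop ℕ∞) + 1) f := by exact_mod_cast hf
    exact (contDiff_succ_iff_deriv.mp h1).2.2
  have hgk : ContDiff ℝ (k : ℕ) (deriv f) :=
    hg.of_le (by exact_mod_cast (by omega : k ≤ 2*k+4))
  have hmono : MonotoneOn (deriv f) (Set.Icc 0 1) :=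
    hconv.monotoneOn_deriv (fun x _ => hfd x)
  have hgnonneg : ∀ x ∈ Set.Icc (0:ℝ) 1, 0 ≤ deriv f x := by
    intro x hx
    have h := hmono (left_mem_Icc.mpr zero_le_one) hx hx.1
    rw [hf'0] at h
    exact h
  have hgsup : ∀ r' ∈ Set.Icc (0:ℝ) 1, ∀ x ∈ Set.Icc 0 r', |deriv f x| ≤ deriv f r' := by
    intro r' hr' x hx
    have hx1 : x ∈ Set.Icc (0:ℝ) 1 := ⟨hx.1, hx.2.trans hr'.2⟩
    rw [abs_of_nonneg (hgnonneg x hx1)]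
    exact hmono hx1 hr' hx.2
  have hMg : ∀ x ∈ Set.Icc (0:ℝ) 1, |iteratedDeriv k (deriv f) x| ≤ M := by
    intro x hx
    rw [← iteratedDeriv_succ']
    exact hM' x hx (k+1) (by omega)
  -- the key Landau estimate (†)
  have hdagger : ∀ r' : ℝ, 0 < r' → r' ≤ 1 → ∀ j, j ≤ k →
      |iteratedDeriv (j+1) f 0| ≤ K * (deriv f r' / r' ^ j + M * r' ^ (k - j)) := by
    intro r' h0 h1 j hj
    have h := hLK (deriv f) hgk 0 r' (deriv f r') M h0 hM.le
      (fun x hx => hgsup r' ⟨h0.le, h1⟩ x hx)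
      (fun x hx => hMg x ⟨hx.1, hx.2.trans h1⟩) j hj 0 ⟨le_refl 0, h0.le⟩
    rw [iteratedDeriv_succ']
    simpa using h
  -- witness index with |f^{(j+1)}(0)| ≥ m
  have hwitness : ∃ j, 1 ≤ j ∧ j ≤ k - 1 ∧ m ≤ |iteratedDeriv (j+1) f 0| := by
    by_contra hcon
    push_neg at hcon
    have h0 := hft 0 (left_mem_Icc.mpr zero_le_one)
    have hsumfact : (∑ j ∈ Finset.Icc 2 k, ((Nat.factorial j : ℝ))⁻¹) ≤ 1 := by
      have := sum_fact_le k hk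
      have h2 : (0:ℝ) ≤ ((Nat.factorial k : ℝ))⁻¹ := by positivity
      linarith
    have hlt : (∑ j ∈ Finset.Icc 2 k, |iteratedDeriv j f 0| / (Nat.factorial j)) < m := by
      have hne : (Finset.Icc 2 k).Nonempty := ⟨2, by simp; omega⟩
      calc ∑ j ∈ Finset.Icc 2 k, |iteratedDeriv j f 0| / (Nat.factorial j)
          < ∑ j ∈ Finset.Icc 2 k, m * ((Nat.factorial j : ℝ))⁻¹ := by
            apply Finset.sum_lt_sum_of_nonempty hne
            intro j hj
            simp only [Finset.mem_Icc] at hj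
            have hfj : (0:ℝ) < (Nat.factorial j : ℝ) := by exact_mod_cast j.factorial_pos
            have hc := hcon (j-1) (by omega) (by omega)
            have hj1 : j - 1 + 1 = j := by omega
            rw [hj1] at hc
            rw [div_eq_mul_inv]
            exact mul_lt_mul_of_pos_right hc (inv_pos.mpr hfj)
        _ = m * ∑ j ∈ Finset.Icc 2 k, ((Nat.factorial j : ℝ))⁻¹ := by rw [Finset.mul_sum]
        _ ≤ m * 1 := mul_le_mul_of_nonneg_left hsumfact hm.le
        _ = m := mul_one m
    linarith
  obtain ⟨j₀, hj₀1, hj₀k, hj₀m⟩ := hwitness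
  -- (★) for small r
  have hstar0 : ∀ r' : ℝ, 0 < r' → r' ≤ r₀ → (m / (2*K)) * r' ^ k ≤ deriv f r' := by
    intro r' h0 h1
    have hr'1 : r' ≤ 1 := h1.trans hr₀le1
    have hd := hdagger r' h0 hr'1 j₀ (by omega)
    have hpow1 : r' ^ (k - j₀) ≤ r' := by
      calc r' ^ (k - j₀) ≤ r' ^ 1 := pow_le_pow_of_le_one h0.le hr'1 (by omega)
        _ = r' := pow_one r'
    have hr₀2 : r₀ ≤ m / (2*K*M) := min_le_right _ _
    have hMr : K * (M * r' ^ (k - j₀)) ≤ m / 2 := by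
      have s1 : K * (M * r' ^ (k - j₀)) ≤ K * (M * r') := by
        have := mul_nonneg (mul_nonneg hKpos.le hM.le) (sub_nonneg.mpr hpow1)
        nlinarith
      have s2 : K * (M * r') ≤ K * (M * r₀) := by
        have := mul_nonneg (mul_nonneg hKpos.le hM.le) (sub_nonneg.mpr h1)
        nlinarith
      have s3 : K * (M * r₀) ≤ m / 2 := by
        have h4 := mul_le_mul_of_nonneg_left hr₀2 (by positivity : (0:ℝ) ≤ K*M)
        have e : K*M*(m/(2*K*M)) = m/2 := by field_simp
        nlinarith
      linarith
    have h3 : m / 2 ≤ K * (deriv f r' / r' ^ j₀) := by nlinarith [hj₀m, hd, hMr]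
    have hPj : (0:ℝ) < r' ^ j₀ := pow_pos h0 _
    have h4 : (m / (2*K)) * r' ^ j₀ ≤ deriv f r' := by
      have h5 := mul_le_mul_of_nonneg_right h3 hPj.le
      have e : K * (deriv f r' / r' ^ j₀) * r' ^ j₀ = K * deriv f r' := by
        have e0 : deriv f r' / r' ^ j₀ * r' ^ j₀ = deriv f r' := div_mul_cancel₀ _ (ne_of_gt hPj)
        calc K * (deriv f r' / r' ^ j₀) * r' ^ j₀ = K * (deriv f r' / r' ^ j₀ * r' ^ j₀) := by ring
          _ = K * deriv f r' := by rw [e0]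
      rw [e] at h5
      rw [div_mul_eq_mul_div, div_le_iff₀ (by positivity : (0:ℝ) < 2*K)]
      nlinarith [h5]
    have h5 : r' ^ k ≤ r' ^ j₀ := pow_le_pow_of_le_one h0.le hr'1 (by omega)
    calc (m/(2*K)) * r'^k ≤ (m/(2*K)) * r'^j₀ :=
          mul_le_mul_of_nonneg_left h5 (by positivity)
      _ ≤ deriv f r' := h4
  -- (★) for all r
  have hstar : ∀ r' : ℝ, 0 < r' → r' ≤ 1 → c₁ * r' ^ k ≤ deriv f r' := by
    intro r' h0 h1
    rcases le_total r' r₀ with h | h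
    · have h2 := hstar0 r' h0 h
      have hrk : r₀ ^ k ≤ 1 := pow_le_one₀ hr₀pos.le hr₀le1
      have hr'k : (0:ℝ) ≤ r' ^ k := (pow_pos h0 k).le
      calc c₁ * r'^k = (m/(2*K)) * r₀^k * r'^k := by rw [hc₁def]
        _ ≤ (m/(2*K)) * r'^k := by nlinarith [mul_nonneg (by positivity : (0:ℝ) ≤ m/(2*K)) hr'k]
        _ ≤ deriv f r' := h2
    · have h2 := hstar0 r₀ hr₀pos (le_refl r₀)
      have h3 : deriv f r₀ ≤ deriv f r' := hmono ⟨hr₀pos.le, hr₀le1⟩ ⟨h0.le, h1⟩ h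
      have h4 : r'^k ≤ 1 := pow_le_one₀ h0.le h1
      calc c₁ * r'^k ≤ c₁ * 1 := mul_le_mul_of_nonneg_left h4 hc₁pos.le
        _ = (m/(2*K)) * r₀^k := by rw [mul_one, hc₁def]
        _ ≤ deriv f r₀ := h2
        _ ≤ deriv f r' := h3
  -- conclude
  rcases eq_or_lt_of_le hr.1 with heq | hrpos
  · -- r = 0
    have hsum0 : (∑ j ∈ Finset.Icc 1 (k-1),
        |iteratedDeriv (j+1) f 0| * r ^ j / (Nat.factorial j)) = 0 := by
      apply Finset.sum_eq_zero
      intro j hj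
      simp only [Finset.mem_Icc] at hj
      rw [← heq, zero_pow (by omega : j ≠ 0)]
      simp
    rw [hsum0, ← heq, zero_pow (by omega : k ≠ 0), hf'0]
    norm_num
  · have hr1 : r ≤ 1 := hr.2
    have hgr := hstar r hrpos hr1
    have hgrnn : 0 ≤ deriv f r := hgnonneg r hr
    have hrk_le : M * r^k ≤ (M/c₁) * deriv f r := by
      have h5 := mul_le_mul_of_nonneg_left hgr (by positivity : (0:ℝ) ≤ M/c₁)
      have hc₁ne : c₁ ≠ 0 := ne_of_gt hc₁pos
      have e : (M/c₁) * (c₁ * r^k) = M * r^k := by field_simp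
      rw [e] at h5
      exact h5
    have hterm : ∀ j ∈ Finset.Icc 1 (k-1),
        |iteratedDeriv (j+1) f 0| * r^j / (Nat.factorial j) ≤ K * (1 + M/c₁) * deriv f r := by
      intro j hj
      simp only [Finset.mem_Icc] at hj
      have hd := hdagger r hrpos hr1 j (by omega)
      have hPj : (0:ℝ) < r ^ j := pow_pos hrpos _
      have h1 : |iteratedDeriv (j+1) f 0| * r^j ≤ K * (deriv f r + M * r^k) := by
        have h5 := mul_le_mul_of_nonneg_right hd hPj.le
        have e2 : r^(k-j) * r^j = r^k := by rw [← pow_add]; congr 1; omega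
        have e0 : deriv f r / r^j * r^j = deriv f r := div_mul_cancel₀ _ (ne_of_gt hPj)
        have e : K * (deriv f r / r^j + M * r^(k-j)) * r^j = K * (deriv f r + M * r^k) := by
          calc K * (deriv f r / r^j + M * r^(k-j)) * r^j
              = K * (deriv f r / r^j * r^j + M * (r^(k-j) * r^j)) := by ring
            _ = K * (deriv f r + M * r^k) := by rw [e0, e2]
        rw [e] at h5
        exact h5
      have hfac : (1:ℝ) ≤ (Nat.factorial j : ℝ) := by exact_mod_cast j.factorial_pos
      have h2 : |iteratedDeriv (j+1) f 0| * r^j / (Nat.factorial j)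
          ≤ |iteratedDeriv (j+1) f 0| * r^j := div_le_self (by positivity) hfac
      calc |iteratedDeriv (j+1) f 0| * r^j / (Nat.factorial j)
          ≤ |iteratedDeriv (j+1) f 0| * r^j := h2
        _ ≤ K * (deriv f r + M * r^k) := h1
        _ ≤ K * (deriv f r + (M/c₁) * deriv f r) := by nlinarith [hrk_le]
        _ = K * (1 + M/c₁) * deriv f r := by ring
    have hSbound : (∑ j ∈ Finset.Icc 1 (k-1),
        |iteratedDeriv (j+1) f 0| * r ^ j / (Nat.factorial j))
        ≤ ((k-1 : ℕ) : ℝ) * (K * (1 + M/c₁) * deriv f r) := by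
      have h5 := Finset.sum_le_card_nsmul (Finset.Icc 1 (k-1))
        (fun j => |iteratedDeriv (j+1) f 0| * r ^ j / (Nat.factorial j))
        (K * (1 + M/c₁) * deriv f r) hterm
      rw [Nat.card_Icc] at h5
      simpa [nsmul_eq_mul] using h5
    have hRHS : (∑ j ∈ Finset.Icc 1 (k-1),
        |iteratedDeriv (j+1) f 0| * r ^ j / (Nat.factorial j)) + M*((k:ℝ)+1)*r^k
        ≤ B * deriv f r := by
      have h6 : M*((k:ℝ)+1)*r^k ≤ ((k:ℝ)+1)*(M/c₁)*deriv f r := by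
        have h7 := mul_le_mul_of_nonneg_left hrk_le (by positivity : (0:ℝ) ≤ (k:ℝ)+1)
        nlinarith [h7]
      have hcast : ((k-1:ℕ):ℝ) ≤ (k:ℝ) := by exact_mod_cast Nat.sub_le k 1
      have hP : (0:ℝ) ≤ K*(1+M/c₁) := by positivity
      have key : ((k-1:ℕ):ℝ) * (K*(1+M/c₁)*deriv f r) ≤ (k:ℝ) * (K*(1+M/c₁)*deriv f r) := by
        have := mul_nonneg (mul_nonneg hP hgrnn) (sub_nonneg.mpr hcast)
        nlinarith
      rw [hBdef]
      nlinarith [hSbound, h6, key, hgrnn]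
    constructor
    · -- lower bound
      have h8 := mul_le_mul_of_nonneg_left hRHS (by positivity : (0:ℝ) ≤ 1/B)
      have e : (1/B) * (B * deriv f r) = deriv f r := by field_simp
      rw [e] at h8
      exact h8
    · -- upper bound via Taylor
      rw [one_mul]
      have hcdOn : ContDiffOn ℝ ((k-1 : ℕ)) (deriv f) (Set.Icc 0 r) :=
        (hgk.of_le (show ((k-1 : ℕ) : WithTop ℕ∞) ≤ ((k : ℕ) : WithTop ℕ∞) by exact_mod_cast Nat.sub_le k 1)).contDiffOn
      have hEq := iterWithin_eq hgk hrpos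
      have hdiffIter : DifferentiableOn ℝ (iteratedDerivWithin (k-1) (deriv f) (Set.Icc 0 r))
          (Set.Ioo 0 r) := by
        have hdg : Differentiable ℝ (iteratedDeriv (k-1) (deriv f)) :=
          hgk.differentiable_iteratedDeriv (k-1) (show ((k-1 : ℕ) : WithTop ℕ∞) < ((k : ℕ) : WithTop ℕ∞) by exact_mod_cast (by omega : k-1 < k))
        apply (hdg.differentiableOn).congr
        intro x hx
        exact hEq (k-1) (by omega) x (Set.Ioo_subset_Icc_self hx)
      have hIcc : uIcc 0 r = Icc 0 r := uIcc_of_le hrpos.le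
      have hIoo : uIoo 0 r = Ioo 0 r := uIoo_of_le hrpos.le
      obtain ⟨x', hx', htay⟩ := taylor_mean_remainder_lagrange (n := k-1) hrpos.ne
        (by rw [hIcc]; exact hcdOn) (by rw [hIcc, hIoo]; exact hdiffIter)
      rw [hIoo] at hx'
      rw [hIcc] at htay
      have hk1e : k - 1 + 1 = k := by omega
      rw [hk1e] at htay
      rw [hEq k (le_refl k) x' ⟨hx'.1.le, hx'.2.le⟩] at htay
      have hrem : |iteratedDeriv k (deriv f) x'| ≤ M := hMg x' ⟨hx'.1.le, hx'.2.le.trans hr1⟩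
      have htaylor_eval : taylorWithinEval (deriv f) (k-1) (Set.Icc 0 r) 0 r
          = ∑ i ∈ Finset.range k, ((Nat.factorial i:ℝ))⁻¹ * r^i * iteratedDeriv i (deriv f) 0 := by
        rw [taylor_within_apply, hk1e]
        apply Finset.sum_congr rfl
        intro i hi
        simp only [Finset.mem_range] at hi
        rw [hEq i (by omega) 0 (left_mem_Icc.mpr hrpos.le)]
        simp only [smul_eq_mul, sub_zero]
      have hg0 : iteratedDeriv 0 (deriv f) 0 = 0 := by
        rw [iteratedDeriv_zero]; exact hf'0
      have hrange : Finset.range k = insert 0 (Finset.Icc 1 (k-1)) := by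
        ext i; simp only [Finset.mem_range, Finset.mem_insert, Finset.mem_Icc]; omega
      have hsum_le : ∑ i ∈ Finset.range k, ((Nat.factorial i:ℝ))⁻¹ * r^i * iteratedDeriv i (deriv f) 0
          ≤ ∑ j ∈ Finset.Icc 1 (k-1), |iteratedDeriv (j+1) f 0| * r ^ j / (Nat.factorial j) := by
        rw [hrange, Finset.sum_insert (by simp)]
        have h00 : ((Nat.factorial 0:ℝ))⁻¹ * r^0 * iteratedDeriv 0 (deriv f) 0 = 0 := by
          rw [hg0]; ring
        rw [h00, zero_add]
        apply Finset.sum_le_sum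
        intro i hi
        simp only [Finset.mem_Icc] at hi
        have h2 : |iteratedDeriv i (deriv f) 0| = |iteratedDeriv (i+1) f 0| := by
          rw [← iteratedDeriv_succ']
        rw [← h2, div_eq_mul_inv]
        have h1 : iteratedDeriv i (deriv f) 0 ≤ |iteratedDeriv i (deriv f) 0| := le_abs_self _
        have hri : (0:ℝ) ≤ r^i := (pow_pos hrpos i).le
        have hfi : (0:ℝ) ≤ ((Nat.factorial i:ℝ))⁻¹ := by positivity
        have hh : 0 ≤ (|iteratedDeriv i (deriv f) 0| - iteratedDeriv i (deriv f) 0) * (r^i * ((Nat.factorial i:ℝ))⁻¹) :=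
          mul_nonneg (sub_nonneg.mpr h1) (mul_nonneg hri hfi)
        nlinarith [hh]
      have hrem2 : iteratedDeriv k (deriv f) x' * (r-0)^k / (Nat.factorial k) ≤ M*((k:ℝ)+1)*r^k := by
        rw [sub_zero]
        have hrk : (0:ℝ) ≤ r^k := (pow_pos hrpos k).le
        have hfk : (1:ℝ) ≤ (Nat.factorial k : ℝ) := by exact_mod_cast k.factorial_pos
        have h1 : iteratedDeriv k (deriv f) x' ≤ M := le_trans (le_abs_self _) hrem
        have h2 : iteratedDeriv k (deriv f) x' * r^k ≤ M * r^k :=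
          mul_le_mul_of_nonneg_right h1 hrk
        have h3 : iteratedDeriv k (deriv f) x' * r^k / (Nat.factorial k) ≤ M * r^k / (Nat.factorial k) :=
          div_le_div_of_nonneg_right h2 (by positivity)
        have h4 : M * r^k / (Nat.factorial k) ≤ M * r^k := div_le_self (by positivity) hfk
        have h5 : M * r^k ≤ M*((k:ℝ)+1)*r^k := by nlinarith [mul_nonneg hM.le hrk, Nat.cast_nonneg (α := ℝ) k]
        linarith
      have hgr_eq : deriv f r = taylorWithinEval (deriv f) (k-1) (Set.Icc 0 r) 0 r
          + iteratedDeriv k (deriv f) x' * (r-0)^k / (Nat.factorial k) := by linarith [htay]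
      rw [hgr_eq, htaylor_eval]
      linarith [hsum_le, hrem2]
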